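/- Let μ be an ℝ^d-valued finite Radon measure on an open set Ω ⊂ ℝ^N, let A ⊂ Ω be open, and let D be a dense subset of the unit sphere S^{d−1}. Then the total variation |μ|(A) equals the supremum over Borel functions ν : Ω → D that are constant on each cell of some rectangular division of ℝ^N with arbitrarily small mesh, of the total variations |⟨μ, ν⟩|(A) of the signed measures ⟨μ, ν⟩. -/

import Mathlib

set_option maxHeartbeats 1000000

open Set Filter MeasureTheory Metric
open scoped RealInnerProductSpace

/-- A vector-valued finite Radon measure `μ` on `Ω ⊆ ℝ^N` is encoded by its polar
decomposition `μ = f · λ`, where `λ = |μ|` is a finite (positive) measure carried by `Ω`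
and `f` is a measurable density of unit norm `λ`-a.e.  Then for an open set `A ⊆ Ω` and a
dense subset `D` of the unit sphere of `ℝ^d`, the total variation `|μ|(A) = λ(A)` is the
supremum of the total variations `|⟨μ, ν⟩|(A) = ∫_A |⟨f, ν⟩| dλ` over all maps
`ν : Ω → D` that are constant on the cells of some `τ`-rectangular division with
arbitrarily small mesh `τ`. -/
theorem stmt11 (N d : ℕ) (Ω A : Set (EuclideanSpace ℝ (Fin N)))
    (hΩ : IsOpen Ω) (hA : IsOpen A) (hAΩ : A ⊆ Ω)
    (lam : Measure (EuclideanSpace ℝ (Fin N))) [IsFiniteMeasure lam]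
    (hcarrier : lam Ωᶜ = 0)
    (f : EuclideanSpace ℝ (Fin N) → EuclideanSpace ℝ (Fin d))
    (hf : Measurable f) (hfnorm : ∀ᵐ x ∂lam, ‖f x‖ = 1)
    (D : Set (EuclideanSpace ℝ (Fin d)))
    (hD : D ⊆ sphere (0 : EuclideanSpace ℝ (Fin d)) 1)
    (hDdense : sphere (0 : EuclideanSpace ℝ (Fin d)) 1 ⊆ closure D) :
    (lam A).toReal = sSup {v : ℝ |
      ∃ τ > (0 : ℝ), ∃ a : ℤ → ℝ,
        StrictMono a ∧ (∀ j, a (j + 1) < a j + τ) ∧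
        Tendsto a atTop atTop ∧ Tendsto a atBot atBot ∧
        ∃ ν : EuclideanSpace ℝ (Fin N) → EuclideanSpace ℝ (Fin d),
          Measurable ν ∧ (∀ y, ν y ∈ D) ∧
          (∀ J : Fin N → ℤ, ∃ e ∈ D, ∀ y : EuclideanSpace ℝ (Fin N),
            (∀ i, a (J i) ≤ y i ∧ y i < a (J i + 1)) → ν y = e) ∧
          v = ∫ x in A, |⟪f x, ν x⟫| ∂lam} := by
  classical
  set S : Set ℝ := {v : ℝ |
      ∃ τ > (0 : ℝ), ∃ a : ℤ → ℝ,
        StrictMono a ∧ (∀ j, a (j + 1) < a j + τ) ∧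
        Tendsto a atTop atTop ∧ Tendsto a atBot atBot ∧
        ∃ ν : EuclideanSpace ℝ (Fin N) → EuclideanSpace ℝ (Fin d),
          Measurable ν ∧ (∀ y, ν y ∈ D) ∧
          (∀ J : Fin N → ℤ, ∃ e ∈ D, ∀ y : EuclideanSpace ℝ (Fin N),
            (∀ i, a (J i) ≤ y i ∧ y i < a (J i + 1)) → ν y = e) ∧
          v = ∫ x in A, |⟪f x, ν x⟫| ∂lam} with hSdef
  rcases Nat.eq_zero_or_pos d with hd | hd
  · -- degenerate case : d = 0
    subst hd
    have hf0 : ∀ x, f x = 0 := fun x => Subsingleton.elim _ _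
    have hlam : lam univ = 0 := by
      have : {x : EuclideanSpace ℝ (Fin N) | ¬ ‖f x‖ = 1} = univ := by
        ext x; simp [hf0 x]
      rw [ae_iff, this] at hfnorm
      exact hfnorm
    have hA0 : lam A = 0 := measure_mono_null (subset_univ A) hlam
    have hSempty : S = ∅ := by
      ext v
      simp only [hSdef, mem_setOf_eq, mem_empty_iff_false, iff_false]
      rintro ⟨τ, hτ, a, _, _, _, _, ν, _, hνD, _⟩
      have := hD (hνD 0)
      rw [mem_sphere_zero_iff_norm] at this
      rw [Subsingleton.elim (ν 0) 0] at this
      simp at this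
    rw [hSempty, Real.sSup_empty, hA0]
    simp
  -- main case: d ≥ 1
  have hAm : MeasurableSet A := hA.measurableSet
  -- a point of D
  have hu0 : (EuclideanSpace.single (⟨0, hd⟩ : Fin d) (1:ℝ)) ∈
      sphere (0 : EuclideanSpace ℝ (Fin d)) 1 := by
    rw [mem_sphere_zero_iff_norm, EuclideanSpace.norm_single]
    norm_num
  obtain ⟨e₀, he₀⟩ : D.Nonempty := by
    rcases closure_nonempty_iff.1 ⟨_, hDdense hu0⟩ with h; exact h
  -- modified density f'
  set f' : EuclideanSpace ℝ (Fin N) → EuclideanSpace ℝ (Fin d) :=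
    fun x => if ‖f x‖ = 1 then f x else 0 with hf'def
  have hf'meas : Measurable f' := by
    apply Measurable.ite _ hf measurable_const
    exact measurableSet_eq_fun (hf.norm) measurable_const
  have hf'ae : f' =ᵐ[lam] f := hfnorm.mono fun x hx => by simp [hf'def, hx]
  have hf'bd : ∀ x, ‖f' x‖ ≤ 1 := by
    intro x
    by_cases hx : ‖f x‖ = 1 <;> simp [hf'def, hx]
  have hf'norm : ∀ᵐ x ∂lam, ‖f' x‖ = 1 := hfnorm.mono fun x hx => by simp [hf'def, hx]
  have hf'int : Integrable f' lam :=
    (integrable_const (1:ℝ)).mono' hf'meas.aestronglyMeasurable (Eventually.of_forall hf'bd)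
  -- upper bound for elements of S
  have hub : ∀ v ∈ S, v ≤ (lam A).toReal := by
    rintro v ⟨τ, hτ, a, _, _, _, _, ν, hνm, hνD, _, rfl⟩
    have hν1 : ∀ x, ‖ν x‖ = 1 := fun x => mem_sphere_zero_iff_norm.1 (hD (hνD x))
    have hbd : ∀ᵐ x ∂(lam.restrict A), |⟪f x, ν x⟫| ≤ 1 := by
      refine ae_restrict_of_ae (hfnorm.mono fun x hx => ?_)
      calc |⟪f x, ν x⟫| ≤ ‖f x‖ * ‖ν x‖ := abs_real_inner_le_norm _ _
        _ = 1 := by rw [hx, hν1 x, mul_one]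
    have hir : Integrable (fun x => |⟪f x, ν x⟫|) (lam.restrict A) := by
      refine (integrable_const (1:ℝ)).mono' ?_ (hbd.mono fun x hx => by
        simpa [Real.norm_eq_abs, abs_abs] using hx)
      exact ((hf.inner hνm).abs).aestronglyMeasurable
    calc ∫ x in A, |⟪f x, ν x⟫| ∂lam ≤ ∫ _x in A, (1:ℝ) ∂lam :=
          integral_mono_ae hir (integrable_const 1) hbd
      _ = (lam A).toReal := by simp; rfl
  -- lower bound via approximation
  have hle : ∀ ε : ℝ, 0 < ε → ∃ v ∈ S, (lam A).toReal - ε ≤ v := by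
    intro ε hε
    set M : ℝ := (lam univ).toReal with hMdef
    have hM0 : 0 ≤ M := ENNReal.toReal_nonneg
    set ε₂ : ℝ := min (1/8) (ε / (6*M + 6)) with hε₂def
    have hε₂pos : 0 < ε₂ := lt_min (by norm_num) (div_pos hε (by positivity))
    have hε₂a : ε₂ ≤ 1/8 := min_le_left _ _
    have hε₂M : 3 * ε₂ * M ≤ ε / 2 := by
      have h1 : ε₂ ≤ ε / (6*M + 6) := min_le_right _ _
      have h2 : ε₂ * (6*M + 6) ≤ ε := by
        rw [← le_div_iff₀ (by positivity)]; exact h1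
      nlinarith [hε₂pos.le, hM0]
    set ε₁ : ℝ := ε / 16 with hε₁def
    have hε₁pos : 0 < ε₁ := by positivity
    -- continuous compactly supported approximation
    obtain ⟨h, hhcs, hhL1, hhcont, hhint⟩ :=
      hf'int.exists_hasCompactSupport_integral_sub_le hε₁pos
    have hunif : UniformContinuous h := hhcs.uniformContinuous_of_continuous hhcont
    obtain ⟨δ, hδpos, hδ⟩ := Metric.uniformContinuous_iff.1 hunif ε₂ hε₂pos
    set s : ℝ := δ / (2 * (Real.sqrt N + 1)) with hsdef
    have hsqrtN : (0:ℝ) ≤ Real.sqrt N := Real.sqrt_nonneg _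
    have hspos : 0 < s := by positivity
    -- the grid
    set a : ℤ → ℝ := fun j => (j : ℝ) * s with hadef
    have hamono : StrictMono a := fun j k hjk =>
      mul_lt_mul_of_pos_right (by exact_mod_cast hjk) hspos
    have hamesh : ∀ j, a (j + 1) < a j + 2 * s := by
      intro j; simp only [hadef]; push_cast; nlinarith [hspos]
    have haTop : Tendsto a atTop atTop :=
      (tendsto_intCast_atTop_iff.2 tendsto_id).atTop_mul_const hspos
    have haBot : Tendsto a atBot atBot :=
      (tendsto_intCast_atBot_iff.2 tendsto_id).atBot_mul_const hspos
    -- index and corner maps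
    set idx : EuclideanSpace ℝ (Fin N) → (Fin N → ℤ) :=
      fun x => fun i => ⌊x i / s⌋ with hidxdef
    have hidxmeas : Measurable idx := by
      apply measurable_pi_lambda
      intro i
      refine Int.measurable_floor.comp (Measurable.div_const ?_ s)
      exact (EuclideanSpace.proj i).continuous.measurable
    set corner : (Fin N → ℤ) → EuclideanSpace ℝ (Fin N) :=
      fun J => (WithLp.equiv 2 (Fin N → ℝ)).symm (fun i => (J i : ℝ) * s) with hcornerdef
    have hcorner_apply : ∀ J i, corner J i = (J i : ℝ) * s := fun J i => rfl
    -- choice of nearby points of D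
    have hnear : ∀ u : EuclideanSpace ℝ (Fin d), ∃ e, e ∈ D ∧ (‖u‖ = 1 → dist u e < ε₂) := by
      intro u
      by_cases hu : ‖u‖ = 1
      · obtain ⟨e, heD, he⟩ := Metric.mem_closure_iff.1
          (hDdense (mem_sphere_zero_iff_norm.2 hu)) ε₂ hε₂pos
        exact ⟨e, heD, fun _ => he⟩
      · exact ⟨e₀, he₀, fun h' => absurd h' hu⟩
    choose near hnearD hnear2 using hnear
    set F : (Fin N → ℤ) → EuclideanSpace ℝ (Fin d) :=
      fun J => near (‖h (corner J)‖⁻¹ • h (corner J)) with hFdef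
    set ν : EuclideanSpace ℝ (Fin N) → EuclideanSpace ℝ (Fin d) :=
      fun x => F (idx x) with hνdef
    have hνmeas : Measurable ν := (measurable_of_countable F).comp hidxmeas
    have hνD : ∀ y, ν y ∈ D := fun y => hnearD _
    have hν1 : ∀ x, ‖ν x‖ = 1 := fun x => mem_sphere_zero_iff_norm.1 (hD (hνD x))
    -- each point lies in its own cell
    have hself : ∀ (x : EuclideanSpace ℝ (Fin N)) (i : Fin N),
        (idx x i : ℝ) * s ≤ x i ∧ x i < ((idx x i : ℝ) + 1) * s := by
      intro x i
      constructor
      · rw [← le_div_iff₀ hspos]; exact Int.floor_le _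
      · rw [← div_lt_iff₀ hspos]; exact Int.lt_floor_add_one _
    -- cell constancy
    have hcell : ∀ J : Fin N → ℤ, ∃ e ∈ D, ∀ y : EuclideanSpace ℝ (Fin N),
        (∀ i, a (J i) ≤ y i ∧ y i < a (J i + 1)) → ν y = e := by
      intro J
      refine ⟨F J, hnearD _, fun y hy => ?_⟩
      have : idx y = J := by
        funext i
        have h1 := (hy i).1
        have h2 := (hy i).2
        simp only [hadef] at h1 h2
        push_cast at h2
        rw [hidxdef]
        rw [Int.floor_eq_iff]
        constructor
        · rw [le_div_iff₀ hspos]; exact h1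
        · rw [div_lt_iff₀ hspos]; linarith
      show F (idx y) = F J
      rw [this]
    -- distance to corner
    have hdistcorner : ∀ x : EuclideanSpace ℝ (Fin N), dist x (corner (idx x)) < δ := by
      intro x
      rw [EuclideanSpace.dist_eq]
      have hb : ∀ i : Fin N, dist (x i) (corner (idx x) i) ^ 2 ≤ s ^ 2 := by
        intro i
        rw [hcorner_apply, Real.dist_eq, sq_abs]
        have h1 := (hself x i).1
        have h2 := (hself x i).2
        nlinarith [hspos]
      calc Real.sqrt (∑ i, dist (x i) (corner (idx x) i) ^ 2)
          ≤ Real.sqrt (∑ _i : Fin N, s ^ 2) :=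
            Real.sqrt_le_sqrt (Finset.sum_le_sum fun i _ => hb i)
        _ = Real.sqrt ((N : ℝ) * s ^ 2) := by
            rw [Finset.sum_const, Finset.card_univ, Fintype.card_fin, nsmul_eq_mul]
        _ = Real.sqrt N * s := by
            rw [Real.sqrt_mul (Nat.cast_nonneg N), Real.sqrt_sq hspos.le]
        _ < δ := by
            have key : (Real.sqrt N + 1) * s = δ / 2 := by
              rw [hsdef]; field_simp
            nlinarith [hspos]
    -- pointwise estimate
    have hpt : ∀ x, ‖f' x‖ = 1 →
        1 - (8 * ‖f' x - h x‖ + 3 * ε₂) ≤ |⟪f' x, ν x⟫| := by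
      intro x hx
      set w : EuclideanSpace ℝ (Fin d) := h (corner (idx x)) with hwdef
      have hxw : ‖h x - w‖ < ε₂ := by
        rw [← dist_eq_norm]; exact hδ (hdistcorner x)
      set b : ℝ := ‖f' x - h x‖ with hbdef
      have hb0 : 0 ≤ b := norm_nonneg _
      have hkey : ‖f' x - ν x‖ ≤ 8 * b + 3 * ε₂ := by
        by_cases hcase : b ≤ 1/4
        · -- close case
          have hwlow : 1 - b - ε₂ ≤ ‖w‖ := by
            have t1 : ‖f' x‖ - ‖w‖ ≤ ‖f' x - w‖ := norm_sub_norm_le _ _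
            have t2 : ‖f' x - w‖ ≤ ‖f' x - h x‖ + ‖h x - w‖ := by
              have e : f' x - w = (f' x - h x) + (h x - w) := by abel
              rw [e]; exact norm_add_le _ _
            rw [hx] at t1
            linarith [hxw]
          have hwpos : 0 < ‖w‖ := by linarith
          have hwne : ‖w‖ ≠ 0 := ne_of_gt hwpos
          set u : EuclideanSpace ℝ (Fin d) := ‖w‖⁻¹ • w with hudef
          have hu1 : ‖u‖ = 1 := by
            rw [hudef, norm_smul, norm_inv, norm_norm, inv_mul_cancel₀ hwne]
          have hνx : ν x = near u := rfl
          have hde : ‖u - near u‖ < ε₂ := by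
            rw [← dist_eq_norm]; exact hnear2 u hu1
          have hwu : ‖w - u‖ = |‖w‖ - 1| := by
            have e : w - u = (1 - ‖w‖⁻¹) • w := by rw [hudef, sub_smul, one_smul]
            rw [e, norm_smul, Real.norm_eq_abs]
            have e2 : |1 - ‖w‖⁻¹| * ‖w‖ = |(1 - ‖w‖⁻¹) * ‖w‖| := by
              rw [abs_mul, abs_of_nonneg (norm_nonneg w)]
            rw [e2, sub_mul, one_mul, inv_mul_cancel₀ hwne, abs_sub_comm]
          have habs : |‖w‖ - 1| ≤ ε₂ + b := by
            have t1 : |‖w‖ - ‖f' x‖| ≤ ‖w - f' x‖ := abs_norm_sub_norm_le _ _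
            rw [hx] at t1
            have t2 : ‖w - f' x‖ ≤ ‖w - h x‖ + ‖h x - f' x‖ := by
              have e : w - f' x = (w - h x) + (h x - f' x) := by abel
              rw [e]; exact norm_add_le _ _
            rw [norm_sub_rev w (h x), norm_sub_rev (h x) (f' x)] at t2
            linarith [hxw]
          have t4 : ‖f' x - ν x‖ ≤ ‖f' x - h x‖ + ‖h x - w‖ + ‖w - u‖ + ‖u - ν x‖ := by
            have e : f' x - ν x = ((f' x - h x) + (h x - w)) + ((w - u) + (u - ν x)) := by abel
            rw [e]
            calc ‖(f' x - h x) + (h x - w) + ((w - u) + (u - ν x))‖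
                ≤ ‖(f' x - h x) + (h x - w)‖ + ‖(w - u) + (u - ν x)‖ := norm_add_le _ _
              _ ≤ (‖f' x - h x‖ + ‖h x - w‖) + (‖w - u‖ + ‖u - ν x‖) :=
                  add_le_add (norm_add_le _ _) (norm_add_le _ _)
              _ = _ := by ring
          have hνu : ‖u - ν x‖ < ε₂ := by rw [hνx]; exact hde
          rw [hwu] at t4
          linarith [hxw, habs, hb0]
        · -- far case
          have : ‖f' x - ν x‖ ≤ ‖f' x‖ + ‖ν x‖ := norm_sub_le _ _
          rw [hx, hν1 x] at this
          linarith [hε₂pos]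
      have hinner : 1 - ‖f' x - ν x‖ ≤ ⟪f' x, ν x⟫ := by
        have he : ⟪f' x, ν x⟫ = ⟪f' x, f' x⟫ - ⟪f' x, f' x - ν x⟫ := by
          rw [inner_sub_right]; ring
        have h2 : ⟪f' x, f' x⟫ = 1 := by
          rw [real_inner_self_eq_norm_sq, hx]; norm_num
        have h3 : ⟪f' x, f' x - ν x⟫ ≤ ‖f' x - ν x‖ := by
          calc ⟪f' x, f' x - ν x⟫ ≤ ‖f' x‖ * ‖f' x - ν x‖ := real_inner_le_norm _ _
            _ = ‖f' x - ν x‖ := by rw [hx, one_mul]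
        rw [he, h2]; linarith
      calc 1 - (8 * b + 3 * ε₂) ≤ 1 - ‖f' x - ν x‖ := by linarith
        _ ≤ ⟪f' x, ν x⟫ := hinner
        _ ≤ |⟪f' x, ν x⟫| := le_abs_self _
    -- integral estimate
    refine ⟨∫ x in A, |⟪f x, ν x⟫| ∂lam,
      ⟨2*s, by positivity, a, hamono, hamesh, haTop, haBot, ν, hνmeas, hνD, hcell, rfl⟩, ?_⟩
    have heq : ∫ x in A, |⟪f x, ν x⟫| ∂lam = ∫ x in A, |⟪f' x, ν x⟫| ∂lam := by
      apply integral_congr_ae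
      filter_upwards [ae_restrict_of_ae hf'ae] with x hx
      rw [hx]
    rw [heq]
    have hIsub : Integrable (fun x => f' x - h x) lam := hf'int.sub hhint
    have hIl : Integrable (fun x => 1 - (8 * ‖f' x - h x‖ + 3 * ε₂)) (lam.restrict A) :=
      ((integrable_const (1:ℝ)).sub
        ((hIsub.norm.const_mul 8).add (integrable_const (3*ε₂)))).restrict
    have hIr : Integrable (fun x => |⟪f' x, ν x⟫|) (lam.restrict A) := by
      refine (integrable_const (1:ℝ)).mono' ((hf'meas.inner hνmeas).abs).aestronglyMeasurable ?_
      refine ae_restrict_of_ae (hf'norm.mono fun x hx => ?_)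
      rw [Real.norm_eq_abs, abs_abs]
      calc |⟪f' x, ν x⟫| ≤ ‖f' x‖ * ‖ν x‖ := abs_real_inner_le_norm _ _
        _ = 1 := by rw [hx, hν1 x, mul_one]
    have hmono : ∫ x in A, (1 - (8 * ‖f' x - h x‖ + 3 * ε₂)) ∂lam
        ≤ ∫ x in A, |⟪f' x, ν x⟫| ∂lam :=
      integral_mono_ae hIl hIr (ae_restrict_of_ae (hf'norm.mono fun x hx => hpt x hx))
    refine le_trans ?_ hmono
    have hsplit : ∫ x in A, (1 - (8 * ‖f' x - h x‖ + 3 * ε₂)) ∂lam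
        = (lam A).toReal - (8 * ∫ x in A, ‖f' x - h x‖ ∂lam + 3 * ε₂ * (lam A).toReal) := by
      have e1 : ∫ x in A, (1 - (8 * ‖f' x - h x‖ + 3 * ε₂)) ∂lam
          = (∫ _x in A, (1:ℝ) ∂lam) - ∫ x in A, (8 * ‖f' x - h x‖ + 3 * ε₂) ∂lam :=
        integral_sub (integrable_const _)
          (((hIsub.norm.const_mul 8).add (integrable_const (3*ε₂))).restrict)
      have e2 : ∫ x in A, (8 * ‖f' x - h x‖ + 3 * ε₂) ∂lam
          = (∫ x in A, 8 * ‖f' x - h x‖ ∂lam) + ∫ _x in A, (3*ε₂ : ℝ) ∂lam :=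
        integral_add (hIsub.norm.const_mul 8).restrict (integrable_const _)
      rw [e1, e2, integral_const_mul, integral_const, integral_const]
      simp only [Measure.real_def, Measure.restrict_apply_univ, smul_eq_mul]
      ring
    rw [hsplit]
    have hI1 : ∫ x in A, ‖f' x - h x‖ ∂lam ≤ ε₁ := by
      refine le_trans (setIntegral_le_integral hIsub.norm
        (Eventually.of_forall fun x => norm_nonneg _)) hhL1
    have hI0 : 0 ≤ ∫ x in A, ‖f' x - h x‖ ∂lam :=
      integral_nonneg fun x => norm_nonneg _
    have hlamA : (lam A).toReal ≤ M := by
      rw [hMdef]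
      exact ENNReal.toReal_mono (measure_ne_top lam univ) (measure_mono (subset_univ A))
    have hlamA0 : 0 ≤ (lam A).toReal := ENNReal.toReal_nonneg
    have h8 : 8 * ε₁ = ε / 2 := by rw [hε₁def]; ring
    nlinarith [hε₂pos.le]
  -- conclude
  obtain ⟨v₁, hv₁S, _⟩ := hle 1 one_pos
  have hne : S.Nonempty := ⟨v₁, hv₁S⟩
  have hbdd : BddAbove S := ⟨(lam A).toReal, hub⟩
  apply le_antisymm
  · refine le_of_forall_sub_le fun ε hε => ?_
    obtain ⟨v, hvS, hv⟩ := hle ε hε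
    exact le_trans hv (le_csSup hbdd hvS)
  · exact csSup_le hne hub
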